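/- With X(u) and C̃_n(r,i,j) as defined by ((X+1)^{r+1} − (X−1)^{r+1})/(2(r+1)) = 1/u^r and −(X+1)^i(X−1)^j dX/du = Σ_{n≥0} C̃_n(r,i,j) u^{n−i−j−2}, one has C̃_n(r, i+r+1, j) − C̃_n(r, i, j+r+1) = 2(r+1)·C̃_{n-1}(r,i,j) for all n ≥ 1. -/

import Mathlib

/-- `Ct X D i j n` is the coefficient `C̃_n(r,i,j)`: the coefficient of `u^(n-i-j-2)` in
`-(X+1)^i (X-1)^j (dX/du)`, where `D = dX/du`. -/
noncomputable def Ct (X D : LaurentSeries ℚ) (i j n : ℕ) : ℚ :=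
  -(((X + 1) ^ i * (X - 1) ^ j * D).coeff ((n : ℤ) - (i : ℤ) - (j : ℤ) - 2))

/-- Let `r` be a positive integer and `X = X(u)` the unique odd Laurent series
`X = 1/u - ((r-1)/6)u + ⋯` satisfying `((X+1)^{r+1} - (X-1)^{r+1})/(2(r+1)) = 1/u^r`,
and let `D = dX/du`.  Then the coefficients `C̃_n(r,i,j)` of
`-(X+1)^i (X-1)^j dX/du = Σ_{n≥0} C̃_n(r,i,j) u^{n-i-j-2}` satisfy
`C̃_n(r,i+r+1,j) - C̃_n(r,i,j+r+1) = 2(r+1)·C̃_{n-1}(r,i,j)` for all `n ≥ 1`. -/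
theorem stmt2 (r : ℕ) (hr : 0 < r) (X D : LaurentSeries ℚ)
    (hodd : ∀ n : ℤ, Even n → X.coeff n = 0)
    (hlead : X.coeff (-1) = 1)
    (hlow : ∀ n : ℤ, n < -1 → X.coeff n = 0)
    (hX : (X + 1) ^ (r + 1) - (X - 1) ^ (r + 1)
        = HahnSeries.single (-(r : ℤ)) ((2 : ℚ) * r + 2))
    (hD : ∀ n : ℤ, D.coeff n = ((n : ℚ) + 1) * X.coeff (n + 1)) :
    ∀ i j n : ℕ, 1 ≤ n →
      Ct X D (i + r + 1) j n - Ct X D i (j + r + 1) n = (2 * (r : ℚ) + 2) * Ct X D i j (n - 1) := by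
  intro i j n hn
  set F : LaurentSeries ℚ := (X + 1) ^ i * (X - 1) ^ j * D with hF
  have key : (X + 1) ^ (i + r + 1) * (X - 1) ^ j * D
      - (X + 1) ^ i * (X - 1) ^ (j + r + 1) * D
      = HahnSeries.single (-(r : ℤ)) ((2 : ℚ) * r + 2) * F := by
    rw [← hX, hF]; ring
  have hm : ((n : ℤ) - ((i + r + 1 : ℕ) : ℤ) - (j : ℤ) - 2)
      = ((n : ℤ) - (i : ℤ) - ((j + r + 1 : ℕ) : ℤ) - 2) := by push_cast; ring
  have hcoeff := congrArg (fun S : LaurentSeries ℚ =>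
      S.coeff ((n : ℤ) - ((i + r + 1 : ℕ) : ℤ) - (j : ℤ) - 2)) key
  simp only [HahnSeries.coeff_sub] at hcoeff
  have hsingle : (HahnSeries.single (-(r : ℤ)) ((2 : ℚ) * r + 2) * F).coeff
      ((n : ℤ) - ((i + r + 1 : ℕ) : ℤ) - (j : ℤ) - 2)
      = ((2 : ℚ) * r + 2) * F.coeff (((n - 1 : ℕ) : ℤ) - (i : ℤ) - (j : ℤ) - 2) := by
    have harg : ((n : ℤ) - ((i + r + 1 : ℕ) : ℤ) - (j : ℤ) - 2)
        = (((n - 1 : ℕ) : ℤ) - (i : ℤ) - (j : ℤ) - 2) + (-(r : ℤ)) := by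
      have : ((n - 1 : ℕ) : ℤ) = (n : ℤ) - 1 := by omega
      push_cast [this]; ring
    rw [harg, HahnSeries.coeff_single_mul_add]
  rw [hsingle] at hcoeff
  simp only [Ct, hF] at *
  rw [hm] at hcoeff ⊢
  linarith [hcoeff]
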